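/- Let f be a map with S(f) ≥ 1 and 1 ≤ c ≤ S(f). For any k with 1 ≤ k ≤ lu(f,c) − 1, S_k(TR[f,c]) = S_k(f); and for any k ≥ lu(f,c), S_k(TR[f,c]) = c. -/
import Mathlib


/-- Truncation of a (nonincreasingly sorted) list of values at `c`: keep values greedily
until the running total reaches `c`; the value where `c` is first reached is cut down and
all later values become `0`.  On a nonincreasing list this is exactly `TR[·, c]`. -/
def trunc : List ℕ → ℕ → List ℕ
  | [], _ => []
  | x :: xs, c => min x c :: trunc xs (c - min x c)

lemma trunc_take_sum (l : List ℕ) (c k : ℕ) :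
    ((trunc l c).take k).sum = min ((l.take k).sum) c := by
  induction l generalizing c k with
  | nil => simp [trunc]
  | cons x xs ih =>
    cases k with
    | zero => simp
    | succ k =>
      simp only [trunc, List.take_succ_cons, List.sum_cons, ih]
      omega

lemma take_sum_le_sum (l : List ℕ) (k : ℕ) : (l.take k).sum ≤ l.sum := by
  conv_rhs => rw [← List.take_append_drop k l]
  rw [List.sum_append]
  exact Nat.le_add_right _ _

lemma take_sum_mono (l : List ℕ) {j k : ℕ} (h : j ≤ k) :
    (l.take j).sum ≤ (l.take k).sum := by
  calc (l.take j).sum = ((l.take k).take j).sum := by rw [List.take_take, min_eq_left h]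
    _ ≤ (l.take k).sum := take_sum_le_sum _ _

/-- let `f` be a map with `S(f) ≥ 1` and `1 ≤ c ≤ S(f)`, and let
`lu(f,c)` be the least `k` with `S_k(f) ≥ c`.  For `1 ≤ k ≤ lu(f,c) − 1` we have
`S_k(TR[f,c]) = S_k(f)`, and for `k ≥ lu(f,c)` we have `S_k(TR[f,c]) = c`.
(Values of `f` are listed in nonincreasing order, so `S_k` is the sum of the first `k`
entries of the corresponding list.) -/
theorem sk_trunc_eq {α : Type*} (s : Finset α) (f : α → ℕ)
    (hS : 1 ≤ ∑ i ∈ s, f i) (c : ℕ) (hc1 : 1 ≤ c) (hc2 : c ≤ ∑ i ∈ s, f i) :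
    ∀ k : ℕ,
      (1 ≤ k → k ≤ sInf {j | c ≤ (((s.val.map f).sort (· ≥ ·)).take j).sum} - 1 →
        ((trunc ((s.val.map f).sort (· ≥ ·)) c).take k).sum =
          (((s.val.map f).sort (· ≥ ·)).take k).sum) ∧
      (sInf {j | c ≤ (((s.val.map f).sort (· ≥ ·)).take j).sum} ≤ k →
        ((trunc ((s.val.map f).sort (· ≥ ·)) c).take k).sum = c) := by
  set L : List ℕ := (s.val.map f).sort (· ≥ ·) with hL
  have hsum : L.sum = ∑ i ∈ s, f i := by
    have : (L : Multiset ℕ) = s.val.map f := Multiset.sort_eq _ _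
    calc L.sum = (L : Multiset ℕ).sum := (Multiset.sum_coe L).symm
      _ = (s.val.map f).sum := by rw [this]
      _ = ∑ i ∈ s, f i := rfl
  have hmem : L.length ∈ {j | c ≤ (L.take j).sum} := by
    simp only [Set.mem_setOf_eq, List.take_length, hsum]; exact hc2
  have hne : {j | c ≤ (L.take j).sum}.Nonempty := ⟨_, hmem⟩
  set lu := sInf {j | c ≤ (L.take j).sum} with hlu
  have hluIn : c ≤ (L.take lu).sum := Nat.sInf_mem hne
  intro k
  constructor
  · intro _ hk
    have hklt : k < lu := by
      have h1 : 1 ≤ lu := by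
        by_contra h
        have h0 : lu = 0 := by omega
        rw [h0] at hluIn
        simp at hluIn
        omega
      omega
    have hnot : k ∉ {j | c ≤ (L.take j).sum} := Nat.notMem_of_lt_sInf hklt
    simp only [Set.mem_setOf_eq, not_le] at hnot
    rw [trunc_take_sum]
    omega
  · intro hk
    have : c ≤ (L.take k).sum := le_trans hluIn (take_sum_mono L hk)
    rw [trunc_take_sum]
    omega
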